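/- Let (S_n) be a centered random walk with i.i.d. increments of finite variance. There is a constant c > 0 such that for all n ≥ 1, E[ e^{S_n} / (∑_{1≤i≤n} e^{S_i}) ] ≤ c / √n. -/

import Mathlib

open MeasureTheory ProbabilityTheory

/-- Partial sums of the increments `X`. -/
noncomputable def rwS {Ω : Type*} (X : ℕ → Ω → ℝ) (n : ℕ) (ω : Ω) : ℝ :=
  ∑ i ∈ Finset.range n, X i ω

open Finset

namespace Stmt4Aux

noncomputable def S (x : ℕ → ℝ) (i : ℕ) : ℝ := ∑ j ∈ Finset.range i, x j

noncomputable def B (x : ℕ → ℝ) (k : ℕ) : ℝ := ∑ i ∈ Finset.Icc 1 k, Real.exp (S x i)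

noncomputable def D (x : ℕ → ℝ) (n k : ℕ) : ℝ := B x n + (Real.exp (S x n) - 1) * B x k

noncomputable def T (x : ℕ → ℝ) (n k : ℕ) : ℝ :=
  Real.exp (S x n) * Real.exp (S x k) / D x n k

def rot (x : ℕ → ℝ) (n k : ℕ) : ℕ → ℝ := fun j => x ((j + k) % n)

noncomputable def R (x : ℕ → ℝ) (n k : ℕ) : ℝ :=
  Real.exp (S (rot x n k) n) / ∑ i ∈ Finset.Icc 1 n, Real.exp (S (rot x n k) i)

variable (x : ℕ → ℝ) {n : ℕ}

lemma B_zero : B x 0 = 0 := by simp [B]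

lemma B_succ (k : ℕ) : B x (k+1) = B x k + Real.exp (S x (k+1)) := by
  rw [B, B, ← Finset.Ico_add_one_right_eq_Icc, ← Finset.Ico_add_one_right_eq_Icc, Finset.sum_Ico_succ_top (by omega)]

lemma B_nonneg (k : ℕ) : 0 ≤ B x k :=
  Finset.sum_nonneg fun i _ => (Real.exp_pos _).le

lemma B_mono {k m : ℕ} (h : k ≤ m) : B x k ≤ B x m :=
  Finset.sum_le_sum_of_subset_of_nonneg (Finset.Icc_subset_Icc_right h)
    (fun i _ _ => (Real.exp_pos _).le)

lemma exp_le_B {k : ℕ} (hk : 1 ≤ k) : Real.exp (S x k) ≤ B x k :=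
  Finset.single_le_sum (f := fun i => Real.exp (S x i))
    (fun i _ => (Real.exp_pos _).le) (Finset.mem_Icc.2 ⟨hk, le_refl k⟩)

lemma Bn_pos (hn : 1 ≤ n) : 0 < B x n :=
  lt_of_lt_of_le (Real.exp_pos _) (exp_le_B x hn)

lemma D_zero : D x n 0 = B x n := by simp [D, B_zero]

lemma D_alt (k : ℕ) : D x n k = (B x n - B x k) + Real.exp (S x n) * B x k := by
  rw [D]; ring

lemma D_ge_of_one_le (h : 1 ≤ Real.exp (S x n)) (k : ℕ) : B x n ≤ D x n k := by
  have := B_nonneg x k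
  have : 0 ≤ (Real.exp (S x n) - 1) * B x k := mul_nonneg (by linarith) this
  rw [D]; linarith

lemma D_ge_of_le_one (h : Real.exp (S x n) ≤ 1) {k : ℕ} (hk : k ≤ n) :
    Real.exp (S x n) * B x n ≤ D x n k := by
  have h1 : (1 - Real.exp (S x n)) * B x k ≤ (1 - Real.exp (S x n)) * B x n :=
    mul_le_mul_of_nonneg_left (B_mono x hk) (by linarith)
  rw [D]; nlinarith [B_nonneg x k, B_nonneg x n]

lemma D_pos (hn : 1 ≤ n) {k : ℕ} (hk : k ≤ n) : 0 < D x n k := by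
  rcases le_total (Real.exp (S x n)) 1 with h | h
  · exact lt_of_lt_of_le (mul_pos (Real.exp_pos _) (Bn_pos x hn)) (D_ge_of_le_one x h hk)
  · exact lt_of_lt_of_le (Bn_pos x hn) (D_ge_of_one_le x h k)

lemma T_nonneg (hn : 1 ≤ n) {k : ℕ} (hk : k ≤ n) : 0 ≤ T x n k := by
  have := D_pos x hn hk
  rw [T]; positivity

lemma T_le_one (hn : 1 ≤ n) {k : ℕ} (hk : k < n) : T x n k ≤ 1 := by
  rw [T, div_le_one (D_pos x hn hk.le), D_alt]
  rcases Nat.eq_zero_or_pos k with rfl | hk1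
  · have h1 : Real.exp (S x n) ≤ B x n := exp_le_B x hn
    have h0 : Real.exp (S x 0) = 1 := by simp [S]
    rw [h0, B_zero, mul_zero, mul_one, sub_zero, add_zero]
    exact h1
  · have h1 : Real.exp (S x k) ≤ B x k := exp_le_B x hk1
    have h2 : B x k ≤ B x n := B_mono x hk.le
    nlinarith [Real.exp_pos (S x n)]

lemma S_rot_low {k i : ℕ} (h : k + i ≤ n) : S (rot x n k) i = S x (k + i) - S x k := by
  have h1 : ∀ j ∈ Finset.range i, rot x n k j = x (k + j) := by
    intro j hj
    have hj' : j + k < n := by have := Finset.mem_range.1 hj; omega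
    simp only [rot]
    rw [Nat.mod_eq_of_lt hj', add_comm]
  rw [S, Finset.sum_congr rfl h1, S, S,
    ← Finset.sum_Ico_eq_sub x (Nat.le_add_right k i), Finset.sum_Ico_eq_sum_range]
  simp

lemma S_rot_high {k m : ℕ} (hk : k < n) (hm : m ≤ k) :
    S (rot x n k) ((n - k) + m) = S x n - S x k + S x m := by
  have ha : k + (n - k) = n := by omega
  have hsplit : S (rot x n k) ((n-k) + m)
      = S (rot x n k) (n-k) + ∑ j ∈ Finset.Ico (n-k) ((n-k)+m), rot x n k j := by
    rw [S, S, Finset.range_eq_Ico, Finset.range_eq_Ico]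
    exact (Finset.sum_Ico_consecutive (rot x n k) (Nat.zero_le _) (Nat.le_add_right _ m)).symm
  have h1 : S (rot x n k) (n-k) = S x n - S x k := by
    rw [S_rot_low x (le_of_eq ha), ha]
  have h2 : ∑ j ∈ Finset.Ico (n-k) ((n-k)+m), rot x n k j = S x m := by
    have h3 : ∀ j ∈ Finset.Ico (n-k) ((n-k)+m), rot x n k j = x (j + k - n) := by
      intro j hj
      have hj' := Finset.mem_Ico.1 hj
      have hge : n ≤ j + k := by omega
      have hlt : j + k - n < n := by omega
      simp only [rot]
      rw [Nat.mod_eq_sub_mod hge, Nat.mod_eq_of_lt hlt]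
    rw [Finset.sum_congr rfl h3, Finset.sum_Ico_eq_sum_range]
    have h4 : ∀ j ∈ Finset.range ((n-k)+m-(n-k)), x ((n-k) + j + k - n) = x j := by
      intro j _; congr 1; omega
    rw [Finset.sum_congr rfl h4]
    have : (n-k)+m-(n-k) = m := by omega
    rw [this, S]
  rw [hsplit, h1, h2]

lemma B_diff {k : ℕ} (hk : k ≤ n) :
    ∑ i ∈ Finset.Icc (k+1) n, Real.exp (S x i) = B x n - B x k := by
  have := Finset.sum_Ico_consecutive (fun i => Real.exp (S x i))
    (Nat.one_le_iff_ne_zero.2 (Nat.succ_ne_zero k)) (Nat.succ_le_succ hk)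
  rw [B, B, ← Finset.Ico_add_one_right_eq_Icc, ← Finset.Ico_add_one_right_eq_Icc, ← Finset.Ico_add_one_right_eq_Icc]
  simp only [Nat.succ_eq_add_one] at this
  linarith [this]

lemma denom_rot (hn : 1 ≤ n) {k : ℕ} (hk : k < n) :
    ∑ i ∈ Finset.Icc 1 n, Real.exp (S (rot x n k) i)
      = (Real.exp (S x k))⁻¹ * D x n k := by
  have ha : k + (n - k) = n := by omega
  have ha1 : 1 ≤ n - k := by omega
  have hsplit : ∑ i ∈ Finset.Icc 1 n, Real.exp (S (rot x n k) i)
      = (∑ i ∈ Finset.Icc 1 (n-k), Real.exp (S (rot x n k) i))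
        + ∑ i ∈ Finset.Icc ((n-k)+1) n, Real.exp (S (rot x n k) i) := by
    rw [← Finset.Ico_add_one_right_eq_Icc, ← Finset.Ico_add_one_right_eq_Icc, ← Finset.Ico_add_one_right_eq_Icc]
    exact (Finset.sum_Ico_consecutive _ (by omega) (by omega)).symm
  have h1 : ∑ i ∈ Finset.Icc 1 (n-k), Real.exp (S (rot x n k) i)
      = (B x n - B x k) * (Real.exp (S x k))⁻¹ := by
    have e1 : ∀ i ∈ Finset.Icc 1 (n-k), Real.exp (S (rot x n k) i)
        = Real.exp (S x (k + i)) * (Real.exp (S x k))⁻¹ := by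
      intro i hi
      have : k + i ≤ n := by have := (Finset.mem_Icc.1 hi).2; omega
      rw [S_rot_low x this, Real.exp_sub, div_eq_mul_inv]
    rw [Finset.sum_congr rfl e1, ← Finset.sum_mul]
    congr 1
    have e2 : ∑ i ∈ Finset.Icc (k+1) n, Real.exp (S x i)
        = ∑ i ∈ Finset.Icc 1 (n-k), Real.exp (S x (k + i)) := by
      rw [← ha, ← Finset.map_add_left_Icc, Finset.sum_map]
      simp [addLeftEmbedding]
    rw [← e2, B_diff x hk.le]
  have h2 : ∑ i ∈ Finset.Icc ((n-k)+1) n, Real.exp (S (rot x n k) i)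
      = Real.exp (S x n) * (Real.exp (S x k))⁻¹ * B x k := by
    have e1 : Finset.Icc ((n-k)+1) n = (Finset.Icc 1 k).map (addLeftEmbedding (n-k)) := by
      rw [Finset.map_add_left_Icc]
      congr 1
      omega
    rw [e1, Finset.sum_map]
    have e2 : ∀ m ∈ Finset.Icc 1 k, Real.exp (S (rot x n k) (addLeftEmbedding (n-k) m))
        = Real.exp (S x n) * (Real.exp (S x k))⁻¹ * Real.exp (S x m) := by
      intro m hm
      have hm' : m ≤ k := (Finset.mem_Icc.1 hm).2
      have : addLeftEmbedding (n-k) m = (n-k) + m := rfl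
      rw [this, S_rot_high x hk hm', Real.exp_add, Real.exp_sub, div_eq_mul_inv]
    rw [Finset.sum_congr rfl e2, ← Finset.mul_sum, B]
  rw [hsplit, h1, h2, D_alt]
  ring

-- appended to combined file later (uses namespace Stmt4Aux context)
lemma R_eq_T (hn : 1 ≤ n) {k : ℕ} (hk : k < n) : R x n k = T x n k := by
  have hnum : S (rot x n k) n = S x n := by
    have h := S_rot_high x hk (le_refl k)
    have h2 : (n - k) + k = n := by omega
    rw [h2] at h
    rw [h]; ring
  rw [R, hnum, denom_rot x hn hk, T, inv_mul_eq_div, div_div_eq_mul_div]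

lemma sum_exp_S (m : ℕ) : ∑ k ∈ Finset.range (m+1), Real.exp (S x k) = 1 + B x m := by
  rw [Finset.sum_range_succ' (fun k => Real.exp (S x k)) m]
  have h0 : Real.exp (S x 0) = 1 := by simp [S]
  have h1 : ∑ k ∈ Finset.range m, Real.exp (S x (k+1)) = B x m := by
    rw [B, ← Finset.Ico_add_one_right_eq_Icc, Finset.sum_Ico_eq_sum_range]
    simp [add_comm]
  rw [h0, h1, add_comm]

lemma sum_T_le (hn : 1 ≤ n) : ∑ k ∈ Finset.range n, T x n k ≤ 6 * (1 + |S x n|) := by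
  obtain ⟨m, rfl⟩ : ∃ m, n = m + 1 := ⟨n - 1, by omega⟩
  set L := S x (m+1) with hL
  have hexpL : 0 < Real.exp L := Real.exp_pos L
  have hBn : 0 < B x (m+1) := Bn_pos x (by omega)
  have hyB : Real.exp L ≤ B x (m+1) := exp_le_B x (by omega)
  have hBm : B x m ≤ B x (m+1) := B_mono x (by omega)
  have habs : 0 ≤ |L| := abs_nonneg L
  have hsum : ∑ k ∈ Finset.range (m+1), T x (m+1) k
      = (∑ k ∈ Finset.range m, T x (m+1) (k+1)) + T x (m+1) 0 :=
    Finset.sum_range_succ' _ m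
  have hT0 : T x (m+1) 0 ≤ 1 := T_le_one x (by omega) (by omega)
  have hTnn : ∀ k ∈ Finset.range m, 0 ≤ T x (m+1) (k+1) := by
    intro k hk
    exact T_nonneg x (by omega) (by have := Finset.mem_range.1 hk; omega)
  have hSnn : 0 ≤ ∑ k ∈ Finset.range m, T x (m+1) (k+1) := Finset.sum_nonneg hTnn
  rcases le_or_gt 1 L with hA | hA'
  · -- Case A : 1 ≤ L
    have hy2 : (2:ℝ) ≤ Real.exp L := by
      calc (2:ℝ) = 1 + 1 := by norm_num
      _ ≤ Real.exp 1 := Real.add_one_le_exp 1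
      _ ≤ Real.exp L := Real.exp_le_exp.2 hA
    have hper : ∀ k ∈ Finset.range m,
        ((Real.exp L - 1)/Real.exp L) * T x (m+1) (k+1)
          ≤ Real.log (D x (m+1) (k+1)) - Real.log (D x (m+1) k) := by
      intro k hk
      have hkm := Finset.mem_range.1 hk
      have hdk : 0 < D x (m+1) k := D_pos x (by omega) (by omega)
      have hdk1 : 0 < D x (m+1) (k+1) := D_pos x (by omega) (by omega)
      have hDd : D x (m+1) (k+1) - D x (m+1) k
          = (Real.exp L - 1) * Real.exp (S x (k+1)) := by
        rw [D, D, B_succ x k, ← hL]; ring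
      have step1 : Real.log (D x (m+1) k) - Real.log (D x (m+1) (k+1))
          ≤ D x (m+1) k / D x (m+1) (k+1) - 1 := by
        have := Real.log_le_sub_one_of_pos (div_pos hdk hdk1)
        rwa [Real.log_div hdk.ne' hdk1.ne'] at this
      have e1 : ((Real.exp L - 1)/Real.exp L) * T x (m+1) (k+1)
          = (D x (m+1) (k+1) - D x (m+1) k) / D x (m+1) (k+1) := by
        rw [T, hDd, ← hL]
        field_simp
      rw [e1]
      have e2 : D x (m+1) k / D x (m+1) (k+1) - 1
          = -((D x (m+1) (k+1) - D x (m+1) k) / D x (m+1) (k+1)) := by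
        field_simp
        ring
      rw [e2] at step1
      linarith
    have hsum1 : ((Real.exp L - 1)/Real.exp L) * ∑ k ∈ Finset.range m, T x (m+1) (k+1)
        ≤ Real.log (D x (m+1) m) - Real.log (D x (m+1) 0) := by
      rw [Finset.mul_sum, ← Finset.sum_range_sub (fun k => Real.log (D x (m+1) k)) m]
      exact Finset.sum_le_sum hper
    have hDm : D x (m+1) m ≤ Real.exp L * B x (m+1) := by
      rw [D, ← hL]; nlinarith [B_nonneg x m]
    have hlog : Real.log (D x (m+1) m) - Real.log (D x (m+1) 0) ≤ L := by
      have h1 : Real.log (D x (m+1) m) ≤ Real.log (Real.exp L * B x (m+1)) :=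
        Real.log_le_log (D_pos x (by omega) (by omega)) hDm
      rw [Real.log_mul hexpL.ne' hBn.ne', Real.log_exp] at h1
      rw [D_zero]
      linarith
    have hcoef : (1:ℝ)/2 ≤ (Real.exp L - 1)/Real.exp L := by
      rw [div_le_div_iff₀ (by norm_num) hexpL]
      linarith
    have hhalf : (1/2) * ∑ k ∈ Finset.range m, T x (m+1) (k+1) ≤ L := by
      calc (1/2) * ∑ k ∈ Finset.range m, T x (m+1) (k+1)
          ≤ ((Real.exp L - 1)/Real.exp L) * ∑ k ∈ Finset.range m, T x (m+1) (k+1) :=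
            mul_le_mul_of_nonneg_right hcoef hSnn
        _ ≤ L := le_trans hsum1 hlog
    have habsL : |L| = L := abs_of_pos (by linarith)
    rw [hsum]
    rw [habsL]
    linarith
  rcases le_or_gt 0 L with hB | hB'
  · -- Case B : 0 ≤ L < 1
    have hy1 : 1 ≤ Real.exp L := Real.one_le_exp hB
    have hy3 : Real.exp L ≤ 3 := by
      have : Real.exp L ≤ Real.exp 1 := Real.exp_le_exp.2 hA'.le
      have h9 := Real.exp_one_lt_d9
      linarith
    have hper : ∀ k ∈ Finset.range (m+1),
        T x (m+1) k ≤ Real.exp L * Real.exp (S x k) / B x (m+1) := by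
      intro k hk
      have hkm := Finset.mem_range.1 hk
      rw [T, ← hL]
      exact div_le_div_of_nonneg_left (by positivity) hBn (D_ge_of_one_le x hy1 k)
    have hstep : ∑ k ∈ Finset.range (m+1), T x (m+1) k
        ≤ Real.exp L * (1 + B x m) / B x (m+1) := by
      calc ∑ k ∈ Finset.range (m+1), T x (m+1) k
          ≤ ∑ k ∈ Finset.range (m+1), Real.exp L * Real.exp (S x k) / B x (m+1) :=
            Finset.sum_le_sum hper
        _ = Real.exp L * (1 + B x m) / B x (m+1) := by
            rw [← sum_exp_S x m, Finset.mul_sum, Finset.sum_div]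
    have hfin : Real.exp L * (1 + B x m) / B x (m+1) ≤ 4 := by
      rw [div_le_iff₀ hBn]
      nlinarith
    have : 6 ≤ 6 * (1 + |L|) := by linarith
    linarith
  rcases le_or_gt (-1) L with hC | hC'
  · -- Case C : -1 ≤ L < 0
    have hy1 : Real.exp L ≤ 1 := (Real.exp_lt_one_iff.2 hB').le
    have hy3 : (1:ℝ)/3 ≤ Real.exp L := by
      have h1 : Real.exp (-1) ≤ Real.exp L := Real.exp_le_exp.2 hC
      have h2 : Real.exp (-1) = 1 / Real.exp 1 := by rw [Real.exp_neg, one_div]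
      have h9 : Real.exp 1 ≤ 3 := by nlinarith [Real.exp_one_lt_d9]
      have h3 : (1:ℝ)/3 ≤ 1 / Real.exp 1 := one_div_le_one_div_of_le (Real.exp_pos 1) h9
      rw [h2] at h1
      linarith
    have hper : ∀ k ∈ Finset.range (m+1),
        T x (m+1) k ≤ Real.exp (S x k) / B x (m+1) := by
      intro k hk
      have hkm := Finset.mem_range.1 hk
      have h1 : Real.exp L * B x (m+1) ≤ D x (m+1) k := D_ge_of_le_one x hy1 (by omega)
      have h2 : T x (m+1) k ≤ Real.exp L * Real.exp (S x k) / (Real.exp L * B x (m+1)) := by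
        rw [T, ← hL]
        exact div_le_div_of_nonneg_left (by positivity) (by positivity) h1
      rwa [mul_div_mul_left _ _ hexpL.ne'] at h2
    have hstep : ∑ k ∈ Finset.range (m+1), T x (m+1) k ≤ (1 + B x m) / B x (m+1) := by
      calc ∑ k ∈ Finset.range (m+1), T x (m+1) k
          ≤ ∑ k ∈ Finset.range (m+1), Real.exp (S x k) / B x (m+1) :=
            Finset.sum_le_sum hper
        _ = (1 + B x m) / B x (m+1) := by rw [← sum_exp_S x m, Finset.sum_div]
    have hfin : (1 + B x m) / B x (m+1) ≤ 4 := by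
      rw [div_le_iff₀ hBn]
      nlinarith
    have : 6 ≤ 6 * (1 + |L|) := by linarith
    linarith
  · -- Case D : L < -1
    have hyhalf : Real.exp L ≤ 1/2 := by
      have h1 : Real.exp L ≤ Real.exp (-1) := Real.exp_le_exp.2 hC'.le
      have h2 : Real.exp (-1) = 1 / Real.exp 1 := by rw [Real.exp_neg, one_div]
      have h9 : (2:ℝ) ≤ Real.exp 1 := by nlinarith [Real.exp_one_gt_d9]
      have h3 : 1 / Real.exp 1 ≤ 1/2 := one_div_le_one_div_of_le (by norm_num) h9
      rw [h2] at h1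
      linarith
    have hy1 : Real.exp L ≤ 1 := by linarith
    have hper : ∀ k ∈ Finset.range m,
        (1/2) * T x (m+1) (k+1)
          ≤ Real.log (D x (m+1) k) - Real.log (D x (m+1) (k+1)) := by
      intro k hk
      have hkm := Finset.mem_range.1 hk
      have hdk : 0 < D x (m+1) k := D_pos x (by omega) (by omega)
      have hdk1 : 0 < D x (m+1) (k+1) := D_pos x (by omega) (by omega)
      have hkey : D x (m+1) (k+1) - Real.exp L * D x (m+1) k
          = (1 - Real.exp L) * ((B x (m+1) - B x (k+1)) + Real.exp L * B x k) := by
        rw [D, D, ← hL]; ring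
      have hge : Real.exp L * D x (m+1) k ≤ D x (m+1) (k+1) := by
        have h1 : 0 ≤ (1 - Real.exp L) * ((B x (m+1) - B x (k+1)) + Real.exp L * B x k) := by
          apply mul_nonneg (by linarith)
          have := B_mono x (show k+1 ≤ m+1 by omega)
          have := B_nonneg x k
          nlinarith
        linarith [hkey]
      have hDd : D x (m+1) k - D x (m+1) (k+1)
          = (1 - Real.exp L) * Real.exp (S x (k+1)) := by
        rw [D, D, B_succ x k, ← hL]; ring
      have step1 : Real.log (D x (m+1) (k+1)) - Real.log (D x (m+1) k)
          ≤ D x (m+1) (k+1) / D x (m+1) k - 1 := by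
        have := Real.log_le_sub_one_of_pos (div_pos hdk1 hdk)
        rwa [Real.log_div hdk1.ne' hdk.ne'] at this
      have he : 0 < Real.exp (S x (k+1)) := Real.exp_pos _
      have step2 : (1/2) * T x (m+1) (k+1)
          ≤ (D x (m+1) k - D x (m+1) (k+1)) / D x (m+1) k := by
        rw [T, hDd, ← hL, show (1:ℝ)/2 * (Real.exp L * Real.exp (S x (k+1)) / D x (m+1) (k+1))
          = (Real.exp L * Real.exp (S x (k+1))) / (2 * D x (m+1) (k+1)) from by ring]
        rw [div_le_div_iff₀ (by positivity) hdk]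
        nlinarith [mul_le_mul_of_nonneg_left hge he.le,
          mul_nonneg (mul_nonneg (show (0:ℝ) ≤ 1 - 2*Real.exp L by linarith) hdk1.le) he.le]
      have e2 : D x (m+1) (k+1) / D x (m+1) k - 1
          = -((D x (m+1) k - D x (m+1) (k+1)) / D x (m+1) k) := by
        field_simp
        ring
      rw [e2] at step1
      linarith
    have hsum1 : (1/2) * ∑ k ∈ Finset.range m, T x (m+1) (k+1)
        ≤ Real.log (D x (m+1) 0) - Real.log (D x (m+1) m) := by
      rw [Finset.mul_sum, ← Finset.sum_range_sub' (fun k => Real.log (D x (m+1) k)) m]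
      exact Finset.sum_le_sum hper
    have hDm : Real.exp L * B x (m+1) ≤ D x (m+1) m := D_ge_of_le_one x hy1 (by omega)
    have hlog : Real.log (D x (m+1) 0) - Real.log (D x (m+1) m) ≤ -L := by
      have h1 : Real.log (Real.exp L * B x (m+1)) ≤ Real.log (D x (m+1) m) :=
        Real.log_le_log (by positivity) hDm
      rw [Real.log_mul hexpL.ne' hBn.ne', Real.log_exp] at h1
      rw [D_zero]
      linarith
    have habsL : |L| = -L := abs_of_neg (by linarith)
    rw [hsum, habsL]
    linarith

lemma sum_R_le (hn : 1 ≤ n) : ∑ k ∈ Finset.range n, R x n k ≤ 6 * (1 + |S x n|) := by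
  have h : ∀ k ∈ Finset.range n, R x n k = T x n k := by
    intro k hk
    exact R_eq_T x hn (Finset.mem_range.1 hk)
  rw [Finset.sum_congr rfl h]
  exact sum_T_le x hn



section Prob

open MeasureTheory ProbabilityTheory

variable {Ω : Type*} [MeasurableSpace Ω] (μ : Measure Ω) [IsProbabilityMeasure μ]
  (X : ℕ → Ω → ℝ)

lemma mapPi (hmeas : ∀ i, Measurable (X i))
    (hindep : iIndepFun X μ)
    (hident : ∀ i, IdentDistrib (X i) (X 0) μ μ)
    (n : ℕ) (π : Fin n → ℕ) (hπ : Function.Injective π) :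
    Measure.map (fun ω (i : Fin n) => X (π i) ω) μ
      = Measure.pi (fun _ => Measure.map (X 0) μ) := by
  have hJ : Measurable (fun ω (i : Fin n) => X (π i) ω) :=
    measurable_pi_lambda _ fun i => hmeas (π i)
  haveI : IsProbabilityMeasure (Measure.map (X 0) μ) :=
    Measure.isProbabilityMeasure_map (hmeas 0).aemeasurable
  refine (Measure.pi_eq fun s hs => ?_).symm
  rw [Measure.map_apply hJ (MeasurableSet.univ_pi hs)]
  have hpre : (fun ω (i : Fin n) => X (π i) ω) ⁻¹' (Set.pi Set.univ s)
      = ⋂ i ∈ (Finset.univ : Finset (Fin n)), X (π i) ⁻¹' s i := by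
    ext ω; simp [Set.mem_pi]
  have hrw : (⋂ i ∈ (Finset.univ : Finset (Fin n)), X (π i) ⁻¹' s i)
      = ⋂ j ∈ Finset.map ⟨π, hπ⟩ Finset.univ,
          X j ⁻¹' (Function.extend π s (fun _ => Set.univ) j) := by
    ext ω
    simp only [Set.mem_iInter, Finset.mem_map, Finset.mem_univ, true_implies,
      Function.Embedding.coeFn_mk]
    constructor
    · rintro h j ⟨i, -, rfl⟩
      rw [hπ.extend_apply]
      exact h i
    · intro h i
      have := h (π i) ⟨i, trivial, rfl⟩
      rwa [hπ.extend_apply] at this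
  have H : ∀ j ∈ Finset.map ⟨π, hπ⟩ Finset.univ,
      MeasurableSet (Function.extend π s (fun _ => Set.univ) j) := by
    intro j hj
    obtain ⟨i, -, rfl⟩ := Finset.mem_map.1 hj
    simp only [Function.Embedding.coeFn_mk]
    rw [hπ.extend_apply]
    exact hs i
  rw [hpre, hrw, hindep.measure_inter_preimage_eq_mul _ H, Finset.prod_map]
  apply Finset.prod_congr rfl
  intro i _
  simp only [Function.Embedding.coeFn_mk, hπ.extend_apply]
  rw [← Measure.map_apply (hmeas (π i)) (hs i), (hident (π i)).map_eq]

noncomputable def pad (n : ℕ) (v : Fin n → ℝ) : ℕ → ℝ :=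
  fun j => if h : j < n then v ⟨j, h⟩ else 0

lemma measurable_G (n : ℕ) : Measurable (fun v : Fin n → ℝ => R (pad n v) n 0) := by
  have hterm : ∀ j : ℕ, Measurable (fun v : Fin n → ℝ => pad n v j) := by
    intro j
    unfold pad
    split_ifs with h
    · exact measurable_pi_apply _
    · exact measurable_const
  have hsum : ∀ i : ℕ, Measurable (fun v : Fin n → ℝ => S (rot (pad n v) n 0) i) := by
    intro i
    unfold S rot
    exact Finset.measurable_sum _ fun j _ => hterm _
  unfold R
  exact ((Real.measurable_exp.comp (hsum n)).div
    (Finset.measurable_sum _ fun i _ => Real.measurable_exp.comp (hsum i)))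

lemma R_congr (x x' : ℕ → ℝ) {n : ℕ} (k : ℕ) (hn : 0 < n) (h : ∀ j < n, x j = x' j) :
    R x n k = R x' n k := by
  have hS : ∀ i, S (rot x n k) i = S (rot x' n k) i := by
    intro i
    unfold S rot
    exact Finset.sum_congr rfl fun j _ => h _ (Nat.mod_lt _ hn)
  unfold R
  rw [hS n]
  congr 1
  exact Finset.sum_congr rfl fun i _ => by rw [hS i]

lemma R_shift (x : ℕ → ℝ) (n k : ℕ) : R (fun j => x ((j + k) % n)) n 0 = R x n k := by
  have hrot : rot (fun j => x ((j + k) % n)) n 0 = rot x n k := by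
    funext j
    simp [rot, Nat.mod_add_mod]
  unfold R
  rw [hrot]

lemma R_zero (x : ℕ → ℝ) {n : ℕ} (hn : 1 ≤ n) :
    R x n 0 = Real.exp (S x n) / ∑ i ∈ Finset.Icc 1 n, Real.exp (S x i) := by
  have h : ∀ i, i ≤ n → S (rot x n 0) i = S x i := by
    intro i hi
    rw [S_rot_low x (by omega : 0 + i ≤ n)]
    have h0 : S x 0 = 0 := by simp [S]
    rw [h0, zero_add, sub_zero]
  rw [R, h n le_rfl]
  congr 1
  exact Finset.sum_congr rfl fun i hi => by rw [h i (Finset.mem_Icc.1 hi).2]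

lemma int_Rk (hmeas : ∀ i, Measurable (X i))
    (hindep : iIndepFun X μ)
    (hident : ∀ i, IdentDistrib (X i) (X 0) μ μ)
    {n k : ℕ} (hk : k < n) :
    ∫ ω, R (fun j => X j ω) n k ∂μ
      = ∫ v, R (pad n v) n 0 ∂(Measure.pi fun _ : Fin n => Measure.map (X 0) μ) := by
  have hn : 0 < n := by omega
  set π : Fin n → ℕ := fun i => ((i : ℕ) + k) % n with hπdef
  have hπ : Function.Injective π := by
    intro a b hab
    simp only [hπdef] at hab
    have h1 : ((a:ℕ) + k) ≡ ((b:ℕ) + k) [MOD n] := hab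
    have h2 : (a:ℕ) ≡ (b:ℕ) [MOD n] := Nat.ModEq.add_right_cancel' k h1
    have h3 : (a:ℕ) % n = (b:ℕ) % n := h2
    rw [Nat.mod_eq_of_lt a.isLt, Nat.mod_eq_of_lt b.isLt] at h3
    exact Fin.ext h3
  have hJ : Measurable (fun ω (i : Fin n) => X (π i) ω) :=
    measurable_pi_lambda _ fun i => hmeas (π i)
  have hmap := mapPi μ X hmeas hindep hident n π hπ
  have hGmeas := measurable_G n
  have hpt : ∀ ω, R (fun j => X j ω) n k = R (pad n (fun i : Fin n => X (π i) ω)) n 0 := by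
    intro ω
    rw [← R_shift (fun j => X j ω) n k]
    apply R_congr _ _ 0 hn
    intro j hj
    simp only [pad, dif_pos hj, hπdef]
  calc ∫ ω, R (fun j => X j ω) n k ∂μ
      = ∫ ω, R (pad n (fun i : Fin n => X (π i) ω)) n 0 ∂μ := by
        exact integral_congr_ae (Filter.Eventually.of_forall fun ω => hpt ω)
    _ = ∫ v, R (pad n v) n 0 ∂(Measure.map (fun ω (i : Fin n) => X (π i) ω) μ) :=
        (integral_map hJ.aemeasurable hGmeas.aestronglyMeasurable).symm
    _ = _ := by rw [hmap]

lemma moment_bound (hindep : iIndepFun X μ)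
    (hident : ∀ i, IdentDistrib (X i) (X 0) μ μ)
    (hL2 : MemLp (X 0) 2 μ) (hmean : μ[X 0] = 0) (n : ℕ) :
    ∫ ω, |∑ i ∈ Finset.range n, X i ω| ∂μ
      ≤ Real.sqrt n * Real.sqrt (variance (X 0) μ) := by
  have hXl2 : ∀ i, MemLp (X i) 2 μ := fun i => (hident i).symm.memLp_snd hL2
  set Z : Ω → ℝ := ∑ i ∈ Finset.range n, X i with hZdef
  have hZapp : ∀ ω, Z ω = ∑ i ∈ Finset.range n, X i ω := by
    intro ω; rw [hZdef]; simp
  have hZl2 : MemLp Z 2 μ := memLp_finset_sum' (Finset.range n) (fun i _ => hXl2 i)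
  have hZmean : μ[Z] = 0 := by
    have e1 : μ[Z] = ∑ i ∈ Finset.range n, μ[X i] := by
      rw [show Z = fun ω => ∑ i ∈ Finset.range n, X i ω from funext hZapp]
      exact integral_finset_sum _ (fun i _ => (hXl2 i).integrable one_le_two)
    have e2 : ∀ i ∈ Finset.range n, μ[X i] = 0 := fun i _ => by
      rw [(hident i).integral_eq]; exact hmean
    rw [e1, Finset.sum_congr rfl e2]
    simp
  have hvarZ : variance Z μ = n * variance (X 0) μ := by
    rw [hZdef, IndepFun.variance_sum (fun i _ => hXl2 i)
      (fun i _ j _ hij => hindep.indepFun hij)]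
    have : ∀ i ∈ Finset.range n, variance (X i) μ = variance (X 0) μ := fun i _ =>
      (hident i).variance_eq
    rw [Finset.sum_congr rfl this, Finset.sum_const, Finset.card_range, nsmul_eq_mul]
  have habs2 : MemLp |Z| 2 μ := hZl2.abs
  have hsq : μ[(|Z|)^2] = μ[Z^2] := by
    apply integral_congr_ae
    filter_upwards with ω
    simp [sq_abs]
  have h1 : (∫ ω, |Z ω| ∂μ)^2 ≤ μ[Z^2] := by
    have hv := variance_nonneg (|Z| : Ω → ℝ) μ
    have hd := variance_eq_sub habs2
    rw [hsq] at hd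
    have he : μ[(|Z| : Ω → ℝ)] = ∫ ω, |Z ω| ∂μ := by
      apply integral_congr_ae
      filter_upwards with ω
      simp
    rw [he] at hd
    rw [hd] at hv
    linarith
  have h2 : μ[Z^2] = variance Z μ := by
    have hd := variance_eq_sub hZl2
    rw [hZmean] at hd
    simpa using hd.symm
  have h3 : (∫ ω, |Z ω| ∂μ)^2 ≤ (n : ℝ) * variance (X 0) μ := by
    rw [← hvarZ, ← h2]; exact h1
  have h4 : (∫ ω, |Z ω| ∂μ) ≤ Real.sqrt ((n:ℝ) * variance (X 0) μ) := by
    have hnn : (0:ℝ) ≤ ∫ ω, |Z ω| ∂μ := integral_nonneg fun ω => abs_nonneg _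
    have h5 := Real.sqrt_le_sqrt h3
    rwa [Real.sqrt_sq hnn] at h5
  have h5 : Real.sqrt ((n:ℝ) * variance (X 0) μ)
      = Real.sqrt n * Real.sqrt (variance (X 0) μ) := Real.sqrt_mul (Nat.cast_nonneg n) _
  have h6 : (∫ ω, |Z ω| ∂μ) = ∫ ω, |∑ i ∈ Finset.range n, X i ω| ∂μ := by
    apply integral_congr_ae
    filter_upwards with ω
    rw [hZapp ω]
  rw [h6, h5] at h4
  exact h4

lemma Fk_meas (hmeas : ∀ i, Measurable (X i)) (n k : ℕ) :
    Measurable (fun ω => R (fun j => X j ω) n k) := by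
  have hsum : ∀ i : ℕ, Measurable (fun ω => S (rot (fun j => X j ω) n k) i) := by
    intro i
    unfold S rot
    exact Finset.measurable_sum _ fun j _ => hmeas _
  unfold R
  exact (Real.measurable_exp.comp (hsum n)).div
    (Finset.measurable_sum _ fun i _ => Real.measurable_exp.comp (hsum i))

end Prob

lemma R_bounds (x : ℕ → ℝ) {n k : ℕ} (hn : 1 ≤ n) (hk : k < n) :
    0 ≤ R x n k ∧ R x n k ≤ 1 := by
  rw [R_eq_T x hn hk]
  exact ⟨T_nonneg x hn hk.le, T_le_one x hn hk⟩

end Stmt4Aux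

theorem stmt_4 {Ω : Type*} [MeasurableSpace Ω] (μ : Measure Ω) [IsProbabilityMeasure μ]
    (X : ℕ → Ω → ℝ) (hmeas : ∀ i, Measurable (X i))
    (hindep : iIndepFun X μ)
    (hident : ∀ i, IdentDistrib (X i) (X 0) μ μ)
    (hL2 : MemLp (X 0) 2 μ) (hmean : μ[X 0] = 0)
    (hvar : 0 < variance (X 0) μ) :
    ∃ c : ℝ, 0 < c ∧ ∀ n : ℕ, 1 ≤ n →
      ∫ ω, Real.exp (rwS X n ω) / (∑ i ∈ Finset.Icc 1 n, Real.exp (rwS X i ω)) ∂μ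
        ≤ c / Real.sqrt n := by
  classical
  set σ := Real.sqrt (variance (X 0) μ) with hσ
  have hσnn : 0 ≤ σ := Real.sqrt_nonneg _
  refine ⟨6 * (1 + σ), by positivity, ?_⟩
  intro n hn
  have hn0 : 0 < n := hn
  set C := ∫ v, Stmt4Aux.R (Stmt4Aux.pad n v) n 0
      ∂(Measure.pi fun _ : Fin n => Measure.map (X 0) μ) with hC
  have hint : ∀ k, k < n → ∫ ω, Stmt4Aux.R (fun j => X j ω) n k ∂μ = C :=
    fun k hk => Stmt4Aux.int_Rk μ X hmeas hindep hident hk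
  have hFint : ∀ k, k < n → Integrable (fun ω => Stmt4Aux.R (fun j => X j ω) n k) μ := by
    intro k hk
    apply Integrable.mono' (integrable_const (1:ℝ))
      (Stmt4Aux.Fk_meas (X := X) hmeas n k).aestronglyMeasurable
    filter_upwards with ω
    have hb := Stmt4Aux.R_bounds (fun j => X j ω) hn hk
    rw [Real.norm_eq_abs, abs_of_nonneg hb.1]
    exact hb.2
  have hZabs_int : Integrable (fun ω => |∑ i ∈ Finset.range n, X i ω|) μ := by
    have hXl2 : ∀ i, MemLp (X i) 2 μ := fun i => (hident i).symm.memLp_snd hL2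
    have h1 : Integrable (fun ω => ∑ i ∈ Finset.range n, X i ω) μ := by
      have := integrable_finset_sum (μ := μ) (Finset.range n)
        (fun i _ => (hXl2 i).integrable one_le_two)
      simpa using this
    exact h1.abs
  have key : (n : ℝ) * C ≤ 6 * (1 + ∫ ω, |∑ i ∈ Finset.range n, X i ω| ∂μ) := by
    have e1 : (n : ℝ) * C = ∑ k ∈ Finset.range n, ∫ ω, Stmt4Aux.R (fun j => X j ω) n k ∂μ := by
      rw [Finset.sum_congr rfl (fun k hk => hint k (Finset.mem_range.1 hk))]
      rw [Finset.sum_const, Finset.card_range, nsmul_eq_mul]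
    have e2 : ∑ k ∈ Finset.range n, ∫ ω, Stmt4Aux.R (fun j => X j ω) n k ∂μ
        = ∫ ω, ∑ k ∈ Finset.range n, Stmt4Aux.R (fun j => X j ω) n k ∂μ :=
      (integral_finset_sum _ fun k hk => hFint k (Finset.mem_range.1 hk)).symm
    have e3 : ∫ ω, ∑ k ∈ Finset.range n, Stmt4Aux.R (fun j => X j ω) n k ∂μ
        ≤ ∫ ω, 6 * (1 + |∑ i ∈ Finset.range n, X i ω|) ∂μ := by
      apply integral_mono (integrable_finset_sum _ fun k hk => hFint k (Finset.mem_range.1 hk))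
      · exact (integrable_const (1:ℝ)).add hZabs_int |>.const_mul 6
      · intro ω
        have := Stmt4Aux.sum_R_le (fun j => X j ω) hn
        simpa [Stmt4Aux.S] using this
    have e4 : ∫ ω, 6 * (1 + |∑ i ∈ Finset.range n, X i ω|) ∂μ
        = 6 * (1 + ∫ ω, |∑ i ∈ Finset.range n, X i ω| ∂μ) := by
      rw [integral_const_mul, integral_add (integrable_const 1) hZabs_int, integral_const]
      simp
    calc (n:ℝ) * C = _ := e1
      _ = _ := e2
      _ ≤ _ := e3
      _ = _ := e4
  have hmom := Stmt4Aux.moment_bound μ X hindep hident hL2 hmean n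
  have hnR : (0:ℝ) < n := Nat.cast_pos.2 hn0
  have hCle : C ≤ 6 * (1 + Real.sqrt n * σ) / n := by
    rw [le_div_iff₀ hnR, mul_comm C]
    calc (n:ℝ) * C ≤ 6 * (1 + ∫ ω, |∑ i ∈ Finset.range n, X i ω| ∂μ) := key
      _ ≤ 6 * (1 + Real.sqrt n * σ) := by
          have : (∫ ω, |∑ i ∈ Finset.range n, X i ω| ∂μ) ≤ Real.sqrt n * σ := hmom
          linarith
  have hIeqC : ∫ ω, Real.exp (rwS X n ω) / (∑ i ∈ Finset.Icc 1 n, Real.exp (rwS X i ω)) ∂μ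
      = C := by
    rw [← hint 0 hn0]
    apply integral_congr_ae
    filter_upwards with ω
    rw [Stmt4Aux.R_zero (fun j => X j ω) hn]
    rfl
  have harith : 6 * (1 + Real.sqrt n * σ) / n ≤ 6 * (1 + σ) / Real.sqrt n := by
    have hns : Real.sqrt n * Real.sqrt n = (n:ℝ) := Real.mul_self_sqrt (Nat.cast_nonneg n)
    have h1n : (1:ℝ) ≤ n := Nat.one_le_cast.2 hn
    have h1s : (1:ℝ) ≤ Real.sqrt n := by
      rw [← Real.sqrt_one]
      exact Real.sqrt_le_sqrt h1n
    rw [div_le_div_iff₀ hnR (by positivity)]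
    nlinarith
  rw [hIeqC]
  exact le_trans hCle harith
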